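/- For any two pseudo-differential operators P and Q over a differential ring, Res_λ[(P e^{xλ})(Q e^{−xλ})] = Res_∂ (P Q*), where Q* is the formal adjoint of Q, Res_∂ extracts the coefficient of ∂^{−1}, and Res_λ extracts the coefficient of λ^{−1} after applying P and Q to the exponentials formally (P e^{xλ} = Σ p_i(x) λ^i e^{xλ} etc.). -/
import Mathlib


/-! STATEMENT 7: For pseudo-differential operators `P, Q` over a differential ring,
`Res_λ[(P e^{xλ})(Q e^{−xλ})] = Res_∂ (P Q*)`.

A pseudo-differential operator of order `≤ b` is represented by its coefficient
function `p : ℤ → A` (with `p i = 0` for `i > b`), standing for `Σ_i p i ∂^i`.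
`compCoeff` gives the coefficients of the composition, `adjCoeff` those of the
formal adjoint.  Since `P e^{xλ} = Σ_i p_i λ^i e^{xλ}` and
`Q e^{−xλ} = Σ_j q_j (−λ)^j e^{−xλ}`, the residue in `λ` of the product is
`Σ_{i+j=−1} (−1)^j p_i q_j`. -/

open Finset

noncomputable section

open Polynomial in
lemma descPochhammer_smeval_eq_prod' (x : ℚ) (l : ℕ) :
    (descPochhammer ℤ l).smeval x = ∏ t ∈ range l, (x - t) := by
  induction l with
  | zero => simp [descPochhammer_zero, Polynomial.smeval_one]
  | succ n ih =>
    rw [descPochhammer_succ_right, Polynomial.smeval_mul, ih, prod_range_succ,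
      Polynomial.smeval_sub, Polynomial.smeval_X, Polynomial.smeval_natCast]
    simp


/-- Generalized binomial coefficient `C(i, l)` for `i : ℤ`, `l : ℕ`. -/
def gbinom (i : ℤ) (l : ℕ) : ℚ :=
  (∏ t ∈ Finset.range l, ((i : ℚ) - t)) / (Nat.factorial l)

variable {A : Type*} [CommRing A] [Algebra ℚ A]

/-- Coefficient of `∂^k` in the composition `P ∘ Q`, where `P = Σ p_i ∂^i` has order
`≤ bp` and `Q = Σ q_j ∂^j` has order `≤ bq`, using
`∂^i ∘ f = Σ_{l≥0} C(i,l) f^{(l)} ∂^{i−l}`. -/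
def compCoeff (d : A → A) (p : ℤ → A) (bp : ℤ) (q : ℤ → A) (bq : ℤ) (k : ℤ) : A :=
  ∑ i ∈ Finset.Icc (k - bq) bp,
    ∑ l ∈ Finset.range ((i + bq - k).toNat + 1),
      gbinom i l • (p i * d^[l] (q (k - i + l)))

/-- Coefficient of `∂^k` in the formal adjoint `Q* = Σ_i (−1)^i ∂^i ∘ q_i` of an
operator of order `≤ bq`. -/
def adjCoeff (d : A → A) (q : ℤ → A) (bq : ℤ) (k : ℤ) : A :=
  ∑ i ∈ Finset.Icc k bq,
    (((-1 : ℚ) ^ i) * gbinom i (i - k).toNat) • d^[(i - k).toNat] (q i)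


lemma gbinom_eq_choose (i : ℤ) (l : ℕ) : gbinom i l = Ring.choose (i : ℚ) l := by
  have h := Ring.descPochhammer_eq_factorial_smul_choose (R := ℚ) (i : ℚ) l
  rw [descPochhammer_smeval_eq_prod'] at h
  rw [gbinom, h, nsmul_eq_mul, mul_div_cancel_left₀]
  exact_mod_cast Nat.factorial_ne_zero l

lemma gbinom_vandermonde (i j : ℤ) (n : ℕ) :
    ∑ l ∈ range (n+1), gbinom i l * gbinom j (n - l) = gbinom (i + j) n := by
  simp only [gbinom_eq_choose]
  rw [Int.cast_add, Ring.add_choose_eq n (Commute.all _ _),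
    Finset.Nat.sum_antidiagonal_eq_sum_range_succ_mk]

lemma gbinom_eq_zero (i : ℤ) (l : ℕ) (h0 : 0 ≤ i) (h : i < l) : gbinom i l = 0 := by
  rw [gbinom, Finset.prod_eq_zero (i := i.toNat) (mem_range.mpr (by omega)), zero_div]
  have : ((i.toNat : ℤ) : ℚ) = (i : ℚ) := by rw [Int.toNat_of_nonneg h0]
  push_cast at this
  rw [this, sub_self]

lemma gbinom_zero_right (i : ℤ) : gbinom i 0 = 1 := by simp [gbinom]

lemma iter_smul (d : Derivation ℚ A A) (l : ℕ) (c : ℚ) (x : A) :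
    (fun x => d x)^[l] (c • x) = c • (fun x => d x)^[l] x := by
  induction l with
  | zero => rfl
  | succ n ih => simp only [Function.iterate_succ_apply', ih, Derivation.map_smul]

lemma iter_sum {ι : Type*} (d : Derivation ℚ A A) (l : ℕ) (s : Finset ι) (f : ι → A) :
    (fun x => d x)^[l] (∑ j ∈ s, f j) = ∑ j ∈ s, (fun x => d x)^[l] (f j) := by
  induction l with
  | zero => rfl
  | succ n ih => simp only [Function.iterate_succ_apply', ih, map_sum]

lemma sum_swap_aux {M : Type*} [AddCommMonoid M] (i bq : ℤ) (F : ℕ → ℤ → M) :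
    ∑ l ∈ range ((i + bq - (-1)).toNat + 1), ∑ j ∈ Finset.Icc (-1 - i + l : ℤ) bq, F l j
      = ∑ j ∈ Finset.Icc (-1 - i) bq, ∑ l ∈ range ((j + 1 + i).toNat + 1), F l j := by
  rw [Finset.sum_sigma', Finset.sum_sigma']
  apply Finset.sum_nbij' (fun x => ⟨x.2, x.1⟩) (fun x => ⟨x.2, x.1⟩) <;>
    rintro ⟨a, b⟩ h <;>
    simp only [Finset.mem_sigma, Finset.mem_range, Finset.mem_Icc] at h ⊢ <;>
    first
      | rfl
      | (constructor <;> omega)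

theorem stmt7 (d : Derivation ℚ A A) (p q : ℤ → A) (bp bq : ℤ)
    (hp : ∀ i : ℤ, bp < i → p i = 0) (hq : ∀ i : ℤ, bq < i → q i = 0) :
    (∑ i ∈ Finset.Icc (-1 - bq) bp, ((-1 : ℚ) ^ (-1 - i)) • (p i * q (-1 - i)))
      = compCoeff (fun x => d x) p bp (adjCoeff (fun x => d x) q bq) bq (-1) := by
  classical
  unfold compCoeff
  apply Finset.sum_congr rfl
  intro i hi
  obtain ⟨hi1, hi2⟩ := Finset.mem_Icc.mp hi
  have step1 : ∀ l ∈ range ((i + bq - (-1)).toNat + 1),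
      gbinom i l • (p i * (fun x => d x)^[l] (adjCoeff (fun x => d x) q bq (-1 - i + l)))
        = ∑ j ∈ Finset.Icc (-1 - i + (l : ℤ)) bq,
            (gbinom i l * (((-1 : ℚ) ^ j) * gbinom j (j - (-1 - i + l)).toNat))
              • (p i * (fun x => d x)^[l + (j - (-1 - i + (l : ℤ))).toNat] (q j)) := by
    intro l hl
    rw [adjCoeff, iter_sum, Finset.mul_sum, Finset.smul_sum]
    apply Finset.sum_congr rfl
    intro j hj
    rw [iter_smul, mul_smul_comm, smul_smul, Function.iterate_add_apply]
  rw [Finset.sum_congr rfl step1, sum_swap_aux]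
  have step2 : ∀ j ∈ Finset.Icc (-1 - i) bq,
      ∑ l ∈ range ((j + 1 + i).toNat + 1),
        (gbinom i l * (((-1 : ℚ) ^ j) * gbinom j (j - (-1 - i + (l : ℤ))).toNat))
          • (p i * (fun x => d x)^[l + (j - (-1 - i + (l : ℤ))).toNat] (q j))
        = (gbinom (i + j) ((j + 1 + i).toNat) * ((-1 : ℚ) ^ j))
            • (p i * (fun x => d x)^[(j + 1 + i).toNat] (q j)) := by
    intro j hj
    obtain ⟨hj1, hj2⟩ := Finset.mem_Icc.mp hj
    set n : ℕ := (j + 1 + i).toNat with hn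
    rw [← gbinom_vandermonde i j n, Finset.sum_mul, Finset.sum_smul]
    apply Finset.sum_congr rfl
    intro l hl
    have hl' : l < n + 1 := Finset.mem_range.mp hl
    have h1 : (j - (-1 - i + (l : ℤ))).toNat = n - l := by omega
    have h2 : l + (n - l) = n := by omega
    rw [h1, h2, mul_comm ((-1 : ℚ) ^ j) (gbinom j (n - l)), ← mul_assoc]
  rw [Finset.sum_congr rfl step2]
  rw [Finset.sum_eq_single (-1 - i)]
  · have h0 : ((-1 : ℤ) - i + 1 + i).toNat = 0 := by omega
    simp [h0, gbinom_zero_right]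
  · intro j hj hne
    obtain ⟨hj1, hj2⟩ := Finset.mem_Icc.mp hj
    have : gbinom (i + j) ((j + 1 + i).toNat) = 0 := by
      apply gbinom_eq_zero _ _ (by omega) (by omega)
    rw [this, zero_mul, zero_smul]
  · intro h
    exact absurd (Finset.mem_Icc.mpr ⟨le_refl _, by omega⟩) h

end
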